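/- The graph C with vertex set {v_i : v ∈ V(H(2,3)), i ∈ Z}, where (a,x)_i ∼ (a,y)_i for x ≠ y, (1,x)_i ∼ (a,x)_i for a ≠ 1, and (2,x)_i ∼ (0,x)_{i+1}, together with the projection ρ(v_i) = v, is a covering map onto H(2,3): ρ is surjective on vertices and induces a bijection N(ṽ) → N(ρ(ṽ)) for every vertex ṽ of C. -/

import Mathlib

/-- The Hamming graph `H(d,q)`: vertices are functions `Fin d → Fin q`,
adjacent iff they differ in exactly one coordinate. -/
def hammingGraph (d q : ℕ) : SimpleGraph (Fin d → Fin q) where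
  Adj v w := ∃! i, v i ≠ w i
  symm := by
    constructor
    rintro v w ⟨i, hi, hu⟩
    exact ⟨i, hi.symm, fun j hj => hu j hj.symm⟩
  loopless := by
    constructor
    rintro v ⟨i, hi, -⟩
    exact hi rfl

/-- `l` is (the list of vertices of) a walk in `G` from `a` to `b`. -/
def IsWalkOn {V : Type*} (G : SimpleGraph V) (a b : V) (l : List V) : Prop :=
  l.Chain' G.Adj ∧ l.head? = some a ∧ l.getLast? = some b

/-- Elementary moves on walks: prunes (and their inverses, anti-prunes,
via symmetry) and spider moves. -/
inductive Move {V : Type*} (G : SimpleGraph V) : List V → List V → Prop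
  | prune (xs ys : List V) (u v : V) (huv : G.Adj u v) :
      Move G (xs ++ u :: v :: u :: ys) (xs ++ u :: ys)
  | spider (xs ys : List V) (u v v' w : V) (hne : v ≠ v')
      (h1 : G.Adj u v') (h2 : G.Adj v' w) :
      Move G (xs ++ u :: v :: w :: ys) (xs ++ u :: v' :: w :: ys)

/-- ×-homotopy rel endpoints: the equivalence relation generated by prunes,
anti-prunes and spider moves. -/
def Homotopic {V : Type*} (G : SimpleGraph V) : List V → List V → Prop :=
  Relation.EqvGen (Move G)

/-- Concatenation of walks sharing an endpoint. -/
def wcat {V : Type*} (l1 l2 : List V) : List V := l1 ++ l2.tail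

/-- Concatenation of a list of closed walks based at `z`. -/
def wprod {V : Type*} (z : V) (ws : List (List V)) : List V := ws.foldr wcat [z]

/-- `u` and `v` differ exactly in coordinate `i`. -/
def DiffAt {d q : ℕ} (u v : Fin d → Fin q) (i : Fin d) : Prop :=
  u i ≠ v i ∧ ∀ j, j ≠ i → u j = v j

/-- A ground walk in coordinate `i`: a closed 3-walk at the all-zeros vertex
whose intermediate vertices are nonzero only in coordinate `i`. -/
def IsGroundWalk (d q : ℕ) [NeZero q] (i : Fin d) (l : List (Fin d → Fin q)) : Prop :=
  ∃ a b : Fin q, a ≠ 0 ∧ b ≠ 0 ∧ a ≠ b ∧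
    l = [(0 : Fin d → Fin q), Function.update (0 : Fin d → Fin q) i a,
      Function.update (0 : Fin d → Fin q) i b, 0]

/-- Number of steps of a walk in which coordinate `i` changes. -/
def changeCount {d q : ℕ} (i : Fin d) : List (Fin d → Fin q) → ℕ
  | x :: y :: rest => (if x i = y i then 0 else 1) + changeCount i (y :: rest)
  | _ => 0

/-- The infinite cover `C` of `H(2,3)`: vertices `v_i` for `v ∈ V(H(2,3))`,
`i ∈ ℤ`, with `(a,x)_i ∼ (a,y)_i` for `x ≠ y`, `(1,x)_i ∼ (a,x)_i` for `a ≠ 1`,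
and `(2,x)_i ∼ (0,x)_{i+1}`. -/
def coverC : SimpleGraph ((Fin 2 → Fin 3) × ℤ) where
  Adj p q :=
    (p.2 = q.2 ∧ p.1 0 = q.1 0 ∧ p.1 1 ≠ q.1 1) ∨
    (p.2 = q.2 ∧ p.1 1 = q.1 1 ∧
      ((p.1 0 = 1 ∧ q.1 0 ≠ 1) ∨ (q.1 0 = 1 ∧ p.1 0 ≠ 1))) ∨
    (p.1 1 = q.1 1 ∧
      ((p.1 0 = 2 ∧ q.1 0 = 0 ∧ q.2 = p.2 + 1) ∨ (p.1 0 = 0 ∧ q.1 0 = 2 ∧ p.2 = q.2 + 1)))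
  symm := by
    constructor
    rintro p q (⟨h1, h2, h3⟩ | ⟨h1, h2, h⟩ | ⟨h1, h⟩)
    · exact Or.inl ⟨h1.symm, h2.symm, h3.symm⟩
    · exact Or.inr (Or.inl ⟨h1.symm, h2.symm, h.symm⟩)
    · rcases h with ⟨ha, hb, hc⟩ | ⟨ha, hb, hc⟩
      · exact Or.inr (Or.inr ⟨h1.symm, Or.inr ⟨hb, ha, hc⟩⟩)
      · exact Or.inr (Or.inr ⟨h1.symm, Or.inl ⟨hb, ha, hc⟩⟩)
  loopless := by
    constructor
    rintro p (⟨-, -, h⟩ | ⟨-, -, (⟨ha, hb⟩ | ⟨ha, hb⟩)⟩ | ⟨-, (⟨ha, hb, -⟩ | ⟨ha, hb, -⟩)⟩)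
    · exact h rfl
    · exact hb ha
    · exact hb ha
    · exact absurd (ha.symm.trans hb) (by decide)
    · exact absurd (ha.symm.trans hb) (by decide)

/-- Shift in the fiber coordinate. -/
def covδ (u v : Fin 2 → Fin 3) : ℤ :=
  if u 0 = 2 ∧ v 0 = 0 then 1 else if u 0 = 0 ∧ v 0 = 2 then -1 else 0

lemma ham_iff (u v : Fin 2 → Fin 3) :
    (hammingGraph 2 3).Adj u v ↔ (u 0 ≠ v 0 ∧ u 1 = v 1) ∨ (u 0 = v 0 ∧ u 1 ≠ v 1) := by
  constructor
  · rintro ⟨i, hi, hu⟩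
    fin_cases i
    · left
      refine ⟨hi, ?_⟩
      by_contra h
      exact absurd (hu 1 h) (by decide)
    · right
      refine ⟨?_, hi⟩
      by_contra h
      exact absurd (hu 0 h) (by decide)
  · rintro (⟨h1, h2⟩ | ⟨h1, h2⟩)
    · exact ⟨0, h1, fun j hj => by fin_cases j <;> simp_all⟩
    · exact ⟨1, h2, fun j hj => by fin_cases j <;> simp_all⟩

lemma key (u v : Fin 2 → Fin 3) (m n : ℤ) :
    coverC.Adj (u, m) (v, n) ↔ ((hammingGraph 2 3).Adj u v ∧ n = m + covδ u v) := by
  rw [ham_iff]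
  show ((m = n ∧ u 0 = v 0 ∧ u 1 ≠ v 1) ∨
    (m = n ∧ u 1 = v 1 ∧
      ((u 0 = 1 ∧ v 0 ≠ 1) ∨ (v 0 = 1 ∧ u 0 ≠ 1))) ∨
    (u 1 = v 1 ∧
      ((u 0 = 2 ∧ v 0 = 0 ∧ n = m + 1) ∨ (u 0 = 0 ∧ v 0 = 2 ∧ m = n + 1)))) ↔ _
  unfold covδ
  rcases h0 : u 0 with ⟨a, ha⟩
  rcases h1 : u 1 with ⟨b, hb⟩
  rcases h2 : v 0 with ⟨c, hc⟩
  rcases h3 : v 1 with ⟨d, hd⟩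
  interval_cases a <;> interval_cases b <;> interval_cases c <;> interval_cases d <;>
    simp_all <;> omega

/-- the projection `ρ(v_i) = v` from `C` to `H(2,3)` is a covering
map: a graph homomorphism, surjective on vertices, inducing a bijection
`N(ṽ) → N(ρ(ṽ))` for every vertex `ṽ`. -/
theorem stmt18 :
    (∀ a b, coverC.Adj a b → (hammingGraph 2 3).Adj a.1 b.1) ∧
    Function.Surjective (Prod.fst : (Fin 2 → Fin 3) × ℤ → (Fin 2 → Fin 3)) ∧
    (∀ p : (Fin 2 → Fin 3) × ℤ,
      Set.BijOn Prod.fst (coverC.neighborSet p) ((hammingGraph 2 3).neighborSet p.1)) := by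
  refine ⟨fun a b h => ((key a.1 b.1 a.2 b.2).1 h).1, fun v => ⟨(v, 0), rfl⟩, fun p => ?_⟩
  refine ⟨fun q hq => ((key p.1 q.1 p.2 q.2).1 hq).1, ?_, ?_⟩
  · intro q hq q' hq' h
    have h1 := (key p.1 q.1 p.2 q.2).1 hq
    have h2 := (key p.1 q'.1 p.2 q'.2).1 hq'
    have : q.2 = q'.2 := by rw [h1.2, h2.2, h]
    exact Prod.ext h this
  · intro w hw
    exact ⟨(w, p.2 + covδ p.1 w), (key p.1 w p.2 _).2 ⟨hw, rfl⟩, rfl⟩
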